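/- Let D be a complete, cocomplete, extremally co-well-powered, (extremal epi, mono) category. Then QD is extremally co-well-powered. -/

import Mathlib

open CategoryTheory CategoryTheory.Limits

universe w v u v₂ u₂

namespace FilteredCats

variable {D : Type u} [Category.{v} D]

/-- The class of morphisms of `D` with source `X`. -/
def MorFrom (X : D) : Type (max u v) := Σ Y : D, X ⟶ Y

/-- `Dom δ₁ δ₂` means `δ₁ ≥ δ₂`: there is `h` with `h ∘ δ₁ = δ₂`. -/
def Dom {X : D} (δ₁ δ₂ : MorFrom X) : Prop :=
  ∃ h : δ₁.1 ⟶ δ₂.1, δ₁.2 ≫ h = δ₂.2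

/-- A projective filtration on `X`: a nonempty, directed, saturated class of
morphisms with source `X`. -/
structure ProjFilt (X : D) where
  carrier : Set (MorFrom X)
  nonempty' : carrier.Nonempty
  directed' : ∀ δ₁ ∈ carrier, ∀ δ₂ ∈ carrier, ∃ δ ∈ carrier, Dom δ δ₁ ∧ Dom δ δ₂
  saturated' : ∀ δ₁ ∈ carrier, ∀ δ₂, Dom δ₁ δ₂ → δ₂ ∈ carrier

/-- The pull back of a set of morphisms with source `X` along `f : X' ⟶ X`. -/
def pullSet {X' X : D} (f : X' ⟶ X) (S : Set (MorFrom X)) : Set (MorFrom X') :=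
  {δ' | ∃ δ ∈ S, δ' = ⟨δ.1, f ≫ δ.2⟩}

/-- The pull back of a projective filtration along `f : X' ⟶ X`. -/
def ProjFilt.pull {X' X : D} (f : X' ⟶ X) (P : ProjFilt X) : ProjFilt X' where
  carrier := pullSet f P.carrier
  nonempty' := by
    obtain ⟨δ, hδ⟩ := P.nonempty'
    exact ⟨⟨δ.1, f ≫ δ.2⟩, δ, hδ, rfl⟩
  directed' := by
    rintro _ ⟨δ₁, h₁, rfl⟩ _ ⟨δ₂, h₂, rfl⟩
    obtain ⟨δ, hδ, ⟨g₁, hg₁⟩, ⟨g₂, hg₂⟩⟩ := P.directed' δ₁ h₁ δ₂ h₂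
    exact ⟨⟨δ.1, f ≫ δ.2⟩, ⟨δ, hδ, rfl⟩,
      ⟨g₁, by simp [hg₁]⟩, ⟨g₂, by simp [hg₂]⟩⟩
  saturated' := by
    rintro _ ⟨δ, hδ, rfl⟩ δ₂ ⟨h, hh⟩
    refine ⟨⟨δ₂.1, δ.2 ≫ h⟩, P.saturated' δ hδ _ ⟨h, rfl⟩, ?_⟩
    obtain ⟨Y₂, g₂⟩ := δ₂
    have hg : g₂ = f ≫ (δ.2 ≫ h) := by simpa using hh.symm
    exact Sigma.ext rfl (heq_of_eq hg)

/-- A projectively filtered object of `D`. -/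
structure PObj (D : Type u) [Category.{v} D] where
  base : D
  filt : ProjFilt base

/-- A morphism of projectively filtered objects: a morphism of the underlying
objects such that the pull back of the target filtration is contained in the
source filtration. -/
structure PHom (A B : PObj D) : Type v where
  toHom : A.base ⟶ B.base
  mem : ∀ δ ∈ B.filt.carrier, (⟨δ.1, toHom ≫ δ.2⟩ : MorFrom A.base) ∈ A.filt.carrier

theorem PHom.ext' {A B : PObj D} {f g : PHom A B} (h : f.toHom = g.toHom) : f = g := by
  cases f; cases g; cases h; rfl

instance : Category.{v} (PObj D) where
  Hom := PHom
  id A := ⟨𝟙 A.base, fun δ hδ => by rw [Category.id_comp]; exact hδ⟩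
  comp {A B C} f g := ⟨f.toHom ≫ g.toHom, fun δ hδ => by
    have h1 := g.mem δ hδ
    have h2 := f.mem _ h1
    simpa using h2⟩
  id_comp f := PHom.ext' (Category.id_comp _)
  comp_id f := PHom.ext' (Category.comp_id _)
  assoc f g h := PHom.ext' (Category.assoc _ _ _)

@[simp] theorem PObj.id_toHom (A : PObj D) : PHom.toHom (𝟙 A) = 𝟙 A.base := rfl
@[simp] theorem PObj.comp_toHom {A B C : PObj D} (f : A ⟶ B) (g : B ⟶ C) :
    PHom.toHom (f ≫ g) = PHom.toHom f ≫ PHom.toHom g := rfl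

/-- The forgetful functor `PD → D`. -/
def Pforget (D : Type u) [Category.{v} D] : PObj D ⥤ D where
  obj A := A.base
  map f := PHom.toHom f

/-- The discrete filtration functor `D → PD`, `X ↦ (X, M(X))`. -/
def Pdiscrete (D : Type u) [Category.{v} D] : D ⥤ PObj D where
  obj X :=
    { base := X
      filt :=
        { carrier := Set.univ
          nonempty' := ⟨⟨X, 𝟙 X⟩, trivial⟩
          directed' := fun δ₁ _ δ₂ _ =>
            ⟨⟨X, 𝟙 X⟩, trivial, ⟨δ₁.2, Category.id_comp _⟩, ⟨δ₂.2, Category.id_comp _⟩⟩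
          saturated' := fun _ _ _ _ => trivial } }
  map f := ⟨f, fun _ _ => trivial⟩

/-- The functor `PD → PE` induced by a functor `G : D → E`. -/
def Pfunctor {E : Type u₂} [Category.{v₂} E] (G : D ⥤ E) : PObj D ⥤ PObj E where
  obj A :=
    { base := G.obj A.base
      filt :=
        { carrier := {δ' | ∃ δ ∈ A.filt.carrier,
            Dom (⟨G.obj δ.1, G.map δ.2⟩ : MorFrom (G.obj A.base)) δ'}
          nonempty' := by
            obtain ⟨δ, hδ⟩ := A.filt.nonempty'
            exact ⟨⟨G.obj δ.1, G.map δ.2⟩, δ, hδ, ⟨𝟙 _, Category.comp_id _⟩⟩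
          directed' := by
            rintro δ'₁ ⟨δ₁, h₁, g₁, hg₁⟩ δ'₂ ⟨δ₂, h₂, g₂, hg₂⟩
            obtain ⟨δ, hδ, ⟨k₁, hk₁⟩, ⟨k₂, hk₂⟩⟩ := A.filt.directed' δ₁ h₁ δ₂ h₂
            refine ⟨⟨G.obj δ.1, G.map δ.2⟩, ⟨δ, hδ, ⟨𝟙 _, Category.comp_id _⟩⟩,
              ⟨G.map k₁ ≫ g₁, ?_⟩, ⟨G.map k₂ ≫ g₂, ?_⟩⟩
            · rw [← Category.assoc, ← G.map_comp, hk₁, hg₁]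
            · rw [← Category.assoc, ← G.map_comp, hk₂, hg₂]
          saturated' := by
            rintro δ'₁ ⟨δ, hδ, g, hg⟩ δ'₂ ⟨h, hh⟩
            exact ⟨δ, hδ, ⟨g ≫ h, by rw [← Category.assoc, hg, hh]⟩⟩ } }
  map {A B} f :=
    ⟨G.map (PHom.toHom f), by
      rintro δ' ⟨δ, hδ, g, hg⟩
      exact ⟨⟨δ.1, PHom.toHom f ≫ δ.2⟩, f.mem δ hδ,
        ⟨g, by rw [← hg, ← Category.assoc, ← G.map_comp]⟩⟩⟩
  map_id A := PHom.ext' (G.map_id _)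
  map_comp f g := PHom.ext' (G.map_comp _ _)

/-- An extremal epimorphism: an epimorphism such that in any factorisation
through a monomorphism, the monomorphism is an isomorphism. -/
def ExtremalEpi {C : Type u₂} [Category.{v₂} C] {X Y : C} (e : X ⟶ Y) : Prop :=
  Epi e ∧ ∀ ⦃Z : C⦄ (g : X ⟶ Z) (m : Z ⟶ Y), Mono m → g ≫ m = e → IsIso m

/-- An (extremal epi, mono) category: every morphism factors as an extremal
epimorphism followed by a monomorphism and such factorisations have the
diagonal fill-in property. -/
structure EMCat (C : Type u₂) [Category.{v₂} C] : Prop where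
  fact : ∀ {X Y : C} (f : X ⟶ Y), ∃ (Z : C) (e : X ⟶ Z) (m : Z ⟶ Y),
    ExtremalEpi e ∧ Mono m ∧ e ≫ m = f
  diag : ∀ {A B Z X : C} (e : A ⟶ B) (m : Z ⟶ X) (g : A ⟶ Z) (h : B ⟶ X),
    ExtremalEpi e → Mono m → g ≫ m = e ≫ h → ∃ d : B ⟶ Z, e ≫ d = g ∧ d ≫ m = h

/-- A projective filtration is reduced if it has an initial subclass of
extremal epimorphisms. -/
def ProjFilt.Reduced {X : D} (P : ProjFilt X) : Prop :=
  ∀ δ ∈ P.carrier, ∃ ε ∈ P.carrier, ExtremalEpi ε.2 ∧ Dom ε δ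

/-- The category of reduced projectively filtered objects of `D`. -/
def QObj (D : Type u) [Category.{v} D] := ObjectProperty.FullSubcategory (fun A : PObj D => A.filt.Reduced)

instance : Category.{v} (QObj D) := ObjectProperty.FullSubcategory.category _

/-- The inclusion functor `QD → PD`. -/
def qpInclusion (D : Type u) [Category.{v} D] : QObj D ⥤ PObj D :=
  ObjectProperty.ι _

/-- A category is extremally co-well-powered if every object has, up to
isomorphism, only a (small) set of extremal epimorphisms out of it. -/
def ECWP (C : Type u₂) [Category.{v₂} C] : Prop :=
  ∀ X : C, ∃ (ι : Type v₂) (Y : ι → C) (e : ∀ i, X ⟶ Y i),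
    (∀ i, ExtremalEpi (e i)) ∧
    ∀ ⦃Z : C⦄ (f : X ⟶ Z), ExtremalEpi f → ∃ (i : ι) (φ : Y i ≅ Z), e i ≫ φ.hom = f

/-- The category `(P, D)` associated to a projective filtration: objects are the
elements of `P`, morphisms `δ₁ → δ₂` are morphisms `g` of `D` with `g ∘ δ₁ = δ₂`. -/
def FiltCat {X : D} (P : ProjFilt X) : Type (max u v) := {δ : MorFrom X // δ ∈ P.carrier}

instance {X : D} (P : ProjFilt X) : Category.{v} (FiltCat P) where
  Hom δ₁ δ₂ := {g : δ₁.1.1 ⟶ δ₂.1.1 // δ₁.1.2 ≫ g = δ₂.1.2}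
  id δ := ⟨𝟙 _, Category.comp_id _⟩
  comp f g := ⟨f.1 ≫ g.1, by rw [← Category.assoc, f.2, g.2]⟩
  id_comp f := Subtype.ext (Category.id_comp _)
  comp_id f := Subtype.ext (Category.comp_id _)
  assoc f g h := Subtype.ext (Category.assoc _ _ _)

/-- The functor `(P, D) → D` sending an element of the filtration to its target. -/
def FiltDiagram {X : D} (P : ProjFilt X) : FiltCat P ⥤ D where
  obj δ := δ.1.1
  map g := g.1

/-- The canonical cone on the diagram of a projective filtration, with apex the
underlying object. -/
def filtCone {X : D} (P : ProjFilt X) : Limits.Cone (FiltDiagram P) where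
  pt := X
  π :=
    { app := fun δ => δ.1.2
      naturality := fun δ₁ δ₂ g => by
        have := g.2
        dsimp [FiltDiagram] at *
        simp [this] }

/-- A reduced projective filtration is an iso-filtration if the canonical cone
on its diagram is a limit cone, i.e. the limit exists and the canonical morphism
from the underlying object to it is an isomorphism. -/
def IsoFilt {X : D} (P : ProjFilt X) : Prop :=
  Nonempty (Limits.IsLimit (filtCone P))

/-- The category of iso-filtered objects of `D`. -/
def KObj (D : Type u) [Category.{v} D] :=
  ObjectProperty.FullSubcategory (fun A : QObj D => IsoFilt A.obj.filt)

instance : Category.{v} (KObj D) := ObjectProperty.FullSubcategory.category _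

/-- The inclusion functor `KD → QD`. -/
def kqInclusion (D : Type u) [Category.{v} D] : KObj D ⥤ QObj D :=
  ObjectProperty.ι _

/-- The forgetful functor `KD → D`. -/
def Kforget (D : Type u) [Category.{v} D] : KObj D ⥤ D :=
  kqInclusion D ⋙ qpInclusion D ⋙ Pforget D

/-- The smallest projective filtration containing a class of morphisms
(as a class). -/
def genSet {X : D} (S : Set (MorFrom X)) : Set (MorFrom X) :=
  {δ | ∀ P : ProjFilt X, S ⊆ P.carrier → δ ∈ P.carrier}

/-- The reduction of a class of morphisms: the saturation of the class of
extremal epimorphism parts of (extremal epi, mono)-factorisations of its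
elements. -/
def redSet {X : D} (S : Set (MorFrom X)) : Set (MorFrom X) :=
  {δ | ∃ ε : MorFrom X, ExtremalEpi ε.2 ∧
    (∃ δ' ∈ S, ∃ m : ε.1 ⟶ δ'.1, Mono m ∧ ε.2 ≫ m = δ'.2) ∧ Dom ε δ}

/-- The push forward of a filtration class along `f` (single morphism case). -/
def pushSet {X Y : D} (f : X ⟶ Y) (S : Set (MorFrom X)) : Set (MorFrom Y) :=
  {g | (⟨g.1, f ≫ g.2⟩ : MorFrom X) ∈ S}

/-- The discrete filtration on an object, as an iso-filtered object. -/
def kDiscreteObj (X : D) : KObj D where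
  obj :=
    { obj := (Pdiscrete D).obj X
      property := fun δ _ => ⟨⟨X, 𝟙 X⟩, trivial,
        ⟨(inferInstance : Epi (𝟙 X)), fun _ g m hm hgm => by
          haveI : IsSplitEpi m := ⟨⟨⟨g, hgm⟩⟩⟩
          exact isIso_of_mono_of_isSplitEpi m⟩,
        ⟨δ.2, Category.id_comp _⟩⟩ }
  property := ⟨{
    lift := fun c => c.π.app ⟨⟨X, 𝟙 X⟩, trivial⟩
    fac := fun c j => by
      have h := c.π.naturality (X := ⟨⟨X, 𝟙 X⟩, trivial⟩) (Y := j)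
        ⟨j.1.2, Category.id_comp _⟩
      dsimp [FiltDiagram, filtCone] at h ⊢
      exact h.symm.trans (Category.id_comp _)
    uniq := fun c m hm => by
      have h := hm ⟨⟨X, 𝟙 X⟩, trivial⟩
      rw [← Category.comp_id m]
      exact h }⟩

/-- The discrete filtration functor `D → KD`. -/
def kDiscrete (D : Type u) [Category.{v} D] : D ⥤ KObj D where
  obj X := kDiscreteObj X
  map f := ⟨f, fun _ _ => trivial⟩
  map_id _ := rfl
  map_comp _ _ := rfl

/-- The morphism in `KD` from an iso-filtered object to the discrete object on
the target of an element of its filtration. -/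
def kToDiscrete {A : KObj D} (δ : MorFrom A.obj.obj.base)
    (hδ : δ ∈ A.obj.obj.filt.carrier) : A ⟶ kDiscreteObj δ.1 :=
  ⟨⟨show PHom A.obj.obj ((kDiscreteObj δ.1).obj.obj) from
    ⟨δ.2, fun γ _ => A.obj.obj.filt.saturated' δ hδ _ ⟨γ.2, rfl⟩⟩⟩⟩

/-- The natural transformation `P(G) → P(H)` induced by `ν : G → H`. -/
def Pnat {E : Type u₂} [Category.{v₂} E] {G H : D ⥤ E} (ν : G ⟶ H) :
    Pfunctor G ⟶ Pfunctor H where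
  app A :=
    ⟨ν.app A.base, by
      rintro δ' ⟨δ, hδ, g, hg⟩
      exact ⟨δ, hδ, ⟨ν.app δ.1 ≫ g, by
        rw [← Category.assoc, ν.naturality, Category.assoc, hg]; rfl⟩⟩⟩
  naturality {A B} f := PHom.ext' (ν.naturality (PHom.toHom f))



@[simp] theorem qcomp_toHom {A B C : QObj D} (f : A ⟶ B) (g : B ⟶ C) :
    (f ≫ g).hom.toHom = f.hom.toHom ≫ g.hom.toHom := rfl

@[simp] theorem qid_toHom (A : QObj D) : (𝟙 A : A ⟶ A).hom.toHom = 𝟙 A.obj.base := rfl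

theorem QHom.ext' {A B : QObj D} {f g : A ⟶ B} (h : f.hom.toHom = g.hom.toHom) :
    f = g := InducedCategory.hom_ext (PHom.ext' h)

/-- Extremal epi composed with an isomorphism is an extremal epi. -/
theorem extremalEpi_comp_iso {C : Type u₂} [Category.{v₂} C] {X Y Z : C}
    {e : X ⟶ Y} {m : Y ⟶ Z} (he : ExtremalEpi e) (hm : IsIso m) :
    ExtremalEpi (e ≫ m) := by
  constructor
  · haveI : Epi e := he.1
    exact epi_comp e m
  · intro W g n hn hgn
    haveI : Mono (n ≫ inv m) := mono_comp n (inv m)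
    have h1 : g ≫ n ≫ inv m = e := by
      rw [← Category.assoc, hgn, Category.assoc, IsIso.hom_inv_id, Category.comp_id]
    have h2 : IsIso (n ≫ inv m) := he.2 g (n ≫ inv m) inferInstance h1
    have h3 : IsIso ((n ≫ inv m) ≫ m) := by exact inferInstance
    rwa [Category.assoc, IsIso.inv_hom_id, Category.comp_id] at h3

/-- If a mono-precomposition `u ≫ ε ≫ μ` belongs to a reduced filtration, so
does `u ≫ ε`. -/
theorem mem_of_comp_mono (hEM : EMCat D) {X : D} {P : ProjFilt X} (hred : P.Reduced)
    {Y E T : D} (u : X ⟶ Y) (ε : Y ⟶ E) (μ : E ⟶ T) (hμ : Mono μ)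
    (h : (⟨T, u ≫ ε ≫ μ⟩ : MorFrom X) ∈ P.carrier) :
    (⟨E, u ≫ ε⟩ : MorFrom X) ∈ P.carrier := by
  obtain ⟨ε', hP, hext, h', hh'⟩ := hred _ h
  obtain ⟨d, hd1, hd2⟩ := hEM.diag ε'.2 μ (u ≫ ε) h' hext hμ
    (by rw [Category.assoc, hh'])
  exact P.saturated' ε' hP _ ⟨d, hd1⟩

theorem pair_mem [Limits.HasLimits D] {X Y : D} (P : ProjFilt X) (u : X ⟶ Y)
    {T₁ T₂ : D} (g₁ : Y ⟶ T₁) (g₂ : Y ⟶ T₂)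
    (h₁ : (⟨T₁, u ≫ g₁⟩ : MorFrom X) ∈ P.carrier)
    (h₂ : (⟨T₂, u ≫ g₂⟩ : MorFrom X) ∈ P.carrier) :
    (⟨T₁ ⨯ T₂, u ≫ Limits.prod.lift g₁ g₂⟩ : MorFrom X) ∈ P.carrier := by
  obtain ⟨δ, hδ, ⟨k₁, hk₁⟩, ⟨k₂, hk₂⟩⟩ := P.directed' _ h₁ _ h₂
  refine P.saturated' δ hδ _ ⟨Limits.prod.lift k₁ k₂, ?_⟩
  apply Limits.prod.hom_ext
  · simp only [Category.assoc, Limits.prod.lift_fst]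
    simpa using hk₁
  · simp only [Category.assoc, Limits.prod.lift_snd]
    simpa using hk₂

/-- The pushforward filtration `S(u, P) = {g | u ∘ g ∈ P}`. -/
def Sfilt [Limits.HasLimits D] {X Y : D} (P : ProjFilt X) (u : X ⟶ Y)
    (hne : ∃ g : MorFrom Y, (⟨g.1, u ≫ g.2⟩ : MorFrom X) ∈ P.carrier) :
    ProjFilt Y where
  carrier := {g | (⟨g.1, u ≫ g.2⟩ : MorFrom X) ∈ P.carrier}
  nonempty' := hne
  directed' := by
    rintro ⟨T₁, g₁⟩ h₁ ⟨T₂, g₂⟩ h₂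
    exact ⟨⟨T₁ ⨯ T₂, Limits.prod.lift g₁ g₂⟩, pair_mem P u g₁ g₂ h₁ h₂,
      ⟨Limits.prod.fst, Limits.prod.lift_fst _ _⟩,
      ⟨Limits.prod.snd, Limits.prod.lift_snd _ _⟩⟩
  saturated' := by
    rintro δ₁ h₁ δ₂ ⟨h, hh⟩
    exact P.saturated' _ h₁ _ ⟨h, by rw [Category.assoc, hh]⟩

theorem Sfilt_reduced [Limits.HasLimits D] (hEM : EMCat D) {X Y : D}
    {P : ProjFilt X} (hred : P.Reduced) (u : X ⟶ Y)
    (hne : ∃ g : MorFrom Y, (⟨g.1, u ≫ g.2⟩ : MorFrom X) ∈ P.carrier) :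
    (Sfilt P u hne).Reduced := by
  rintro ⟨T, g⟩ hg
  obtain ⟨E, ε, μ, hε, hμ, hfact⟩ := hEM.fact g
  have hmem : (⟨T, u ≫ ε ≫ μ⟩ : MorFrom X) ∈ P.carrier := by rw [hfact]; exact hg
  exact ⟨⟨E, ε⟩, mem_of_comp_mono hEM hred u ε μ hμ hmem, hε, ⟨μ, hfact⟩⟩

/-- The reduced projectively filtered object `(Y, S(u, P))`. -/
def SQobj [Limits.HasLimits D] (hEM : EMCat D) (A : QObj D) {Y : D}
    (u : A.obj.base ⟶ Y)
    (hne : ∃ g : MorFrom Y,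
      (⟨g.1, u ≫ g.2⟩ : MorFrom A.obj.base) ∈ A.obj.filt.carrier) : QObj D :=
  ⟨⟨Y, Sfilt A.obj.filt u hne⟩, Sfilt_reduced hEM A.property u hne⟩

/-- The canonical morphism `A ⟶ (Y, S(u, P))`. -/
def shom [Limits.HasLimits D] (hEM : EMCat D) (A : QObj D) {Y : D}
    (u : A.obj.base ⟶ Y)
    (hne : ∃ g : MorFrom Y,
      (⟨g.1, u ≫ g.2⟩ : MorFrom A.obj.base) ∈ A.obj.filt.carrier) :
    A ⟶ SQobj hEM A u hne :=
  ⟨show PHom A.obj (SQobj hEM A u hne).obj from ⟨u, fun _ hδ => hδ⟩⟩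

theorem qmono_of_mono {A B : QObj D} (f : A ⟶ B) (h : Mono f.hom.toHom) :
    Mono f := by
  refine ⟨fun g₁ g₂ hgg => QHom.ext' ?_⟩
  have := congrArg (fun f => f.hom.toHom) hgg
  simp only [qcomp_toHom] at this
  exact (cancel_mono _).1 this

/-- Key rigidity lemma: the target filtration of an extremal epimorphism in
`QD` contains every morphism whose pull back lies in the source filtration. -/
theorem mem_filt_of_extremal [Limits.HasLimits D] (hEM : EMCat D)
    {A B : QObj D} (f : A ⟶ B) (hf : ExtremalEpi f) (g : MorFrom B.obj.base)
    (hg : (⟨g.1, f.hom.toHom ≫ g.2⟩ : MorFrom A.obj.base) ∈ A.obj.filt.carrier) :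
    g ∈ B.obj.filt.carrier := by
  set u := f.hom.toHom with hu
  have hne : ∃ g : MorFrom B.obj.base,
      (⟨g.1, u ≫ g.2⟩ : MorFrom A.obj.base) ∈ A.obj.filt.carrier := ⟨g, hg⟩
  let B' : QObj D := SQobj hEM A u hne
  let f' : A ⟶ B' := shom hEM A u hne
  let m' : B' ⟶ B := ⟨show PHom B'.obj B.obj from
    ⟨𝟙 _, fun δ hδ => by
      have := f.hom.mem δ hδ
      show (⟨δ.1, f.hom.toHom ≫ 𝟙 _ ≫ δ.2⟩ : MorFrom A.obj.base) ∈ A.obj.filt.carrier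
      erw [Category.id_comp]; exact this⟩⟩
  have hmono : Mono m' := qmono_of_mono m' (by
    show Mono (𝟙 _); infer_instance)
  have hcomp : f' ≫ m' = f := QHom.ext' (Category.comp_id u)
  haveI hiso : IsIso m' := hf.2 f' m' hmono hcomp
  let j : B ⟶ B' := inv m'
  have hjm : j.hom.toHom = 𝟙 B.obj.base := by
    have h1 := congrArg (fun f => f.hom.toHom) (IsIso.inv_hom_id m')
    simp only [qcomp_toHom, qid_toHom] at h1
    erw [Category.comp_id] at h1
    exact h1
  have hmem := j.hom.mem g hg
  rw [hjm] at hmem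
  obtain ⟨T, g⟩ := g
  erw [Category.id_comp] at hmem; exact hmem

/-- Part A: the underlying morphism of an extremal epimorphism in `QD` is an
extremal epimorphism in `D`. -/
theorem toHom_extremalEpi [Limits.HasLimits D] (hEM : EMCat D)
    {A B : QObj D} (f : A ⟶ B) (hf : ExtremalEpi f) :
    ExtremalEpi (f.hom.toHom) := by
  obtain ⟨Z, e, m, he, hm, hfact⟩ := hEM.fact (f.hom.toHom)
  have hne : ∃ g : MorFrom Z,
      (⟨g.1, e ≫ g.2⟩ : MorFrom A.obj.base) ∈ A.obj.filt.carrier := by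
    obtain ⟨δ, hδ⟩ := B.obj.filt.nonempty'
    refine ⟨⟨δ.1, m ≫ δ.2⟩, ?_⟩
    have := f.hom.mem δ hδ
    rw [← hfact] at this
    simpa using this
  let B'' : QObj D := SQobj hEM A e hne
  let ehat : A ⟶ B'' := shom hEM A e hne
  let mhat : B'' ⟶ B := ⟨show PHom B''.obj B.obj from
    ⟨m, fun δ hδ => by
      have := f.hom.mem δ hδ
      rw [← hfact] at this
      rw [Category.assoc] at this; exact this⟩⟩
  have hmono : Mono mhat := qmono_of_mono mhat hm
  have hcomp : ehat ≫ mhat = f := QHom.ext' hfact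
  haveI hiso : IsIso mhat := hf.2 ehat mhat hmono hcomp
  have hmiso : IsIso m := by
    have h1 := congrArg (fun f => f.hom.toHom) (IsIso.hom_inv_id mhat)
    have h2 := congrArg (fun f => f.hom.toHom) (IsIso.inv_hom_id mhat)
    simp only [qcomp_toHom, qid_toHom] at h1 h2
    exact ⟨⟨(inv mhat).hom.toHom, h1, h2⟩⟩
  rw [← hfact]
  exact extremalEpi_comp_iso he hmiso

/-- `QD` is extremally co-well-powered. -/
theorem qobj_ecwp [Limits.HasLimits D] [Limits.HasColimits D]
    (hecwp : ECWP D) (hEM : EMCat D) :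
    ECWP (QObj D) := by
  intro A
  obtain ⟨ι, Y, e, he, hcov⟩ := hecwp A.obj.base
  classical
  let H : ι → Prop := fun i => ∃ g : MorFrom (Y i),
    (⟨g.1, e i ≫ g.2⟩ : MorFrom A.obj.base) ∈ A.obj.filt.carrier
  let Pred : ι → Prop := fun i =>
    ∃ hne : H i, ExtremalEpi (shom hEM A (e i) hne)
  refine ⟨{i : ι // Pred i}, fun i => SQobj hEM A (e i.1) i.2.choose,
    fun i => shom hEM A (e i.1) i.2.choose, fun i => i.2.choose_spec, ?_⟩
  intro B f hf
  have hu : ExtremalEpi (f.hom.toHom) := toHom_extremalEpi hEM f hf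
  obtain ⟨i, φ, hφ⟩ := hcov (f.hom.toHom) hu
  -- S(e i) is nonempty
  have hne : H i := by
    obtain ⟨δ, hδ⟩ := B.obj.filt.nonempty'
    refine ⟨⟨δ.1, φ.hom ≫ δ.2⟩, ?_⟩
    have h1 : e i ≫ φ.hom ≫ δ.2 = f.hom.toHom ≫ δ.2 := by
      rw [← Category.assoc, hφ]
    have := f.hom.mem δ hδ
    simpa [h1] using this
  -- the lifted isomorphism
  let ψhom : SQobj hEM A (e i) hne ⟶ B := ⟨show PHom _ B.obj from
    ⟨φ.hom, fun δ hδ => by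
      have h1 : e i ≫ φ.hom ≫ δ.2 = f.hom.toHom ≫ δ.2 := by
        rw [← Category.assoc, hφ]
      have := f.hom.mem δ hδ
      show (⟨δ.1, e i ≫ φ.hom ≫ δ.2⟩ : MorFrom A.obj.base) ∈ A.obj.filt.carrier
      rw [h1]; exact this⟩⟩
  let ψinv : B ⟶ SQobj hEM A (e i) hne := ⟨show PHom B.obj _ from
    ⟨φ.inv, fun δ hδ => by
      refine mem_filt_of_extremal hEM f hf ⟨δ.1, φ.inv ≫ δ.2⟩ ?_
      have h1 : f.hom.toHom ≫ φ.inv ≫ δ.2 = e i ≫ δ.2 := by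
        erw [← hφ, Category.assoc, Iso.hom_inv_id_assoc]
      show (⟨δ.1, f.hom.toHom ≫ φ.inv ≫ δ.2⟩ : MorFrom A.obj.base) ∈ A.obj.filt.carrier
      rw [h1]; exact hδ⟩⟩
  have hiso1 : ψhom ≫ ψinv = 𝟙 _ := QHom.ext' φ.hom_inv_id
  have hiso2 : ψinv ≫ ψhom = 𝟙 _ := QHom.ext' φ.inv_hom_id
  haveI hψ : IsIso ψinv := ⟨⟨ψhom, hiso2, hiso1⟩⟩
  have hshape : shom hEM A (e i) hne = f ≫ ψinv :=
    QHom.ext' (show e i = f.hom.toHom ≫ φ.inv by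
      rw [← hφ, Category.assoc, φ.hom_inv_id, Category.comp_id])
  have hpred : Pred i := ⟨hne, by rw [hshape]; exact extremalEpi_comp_iso hf hψ⟩
  exact ⟨⟨i, hpred⟩, ⟨ψhom, ψinv, hiso1, hiso2⟩, QHom.ext' hφ⟩

end FilteredCats
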